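/- Let e₁,…,e₉ be the standard basis of ℂ⁹. The 3-dimensional subspace W of ℂ⁹ spanned by the vectors e₄ − e₅, e₈ − e₆, and e₇ − e₉ is invariant under each of the three 9×9 matrices σ₁ = diag(ω², 1, ω², 1, 1, 1, ω, 1, ω), σ₃ = diag(ω², ω², 1, 1, 1, ω, 1, ω, 1), and σ₂ = (1/3)·M, where M has rows (1,ω,ω,ω²,ω²,1,1,1,1), (ω,1,ω,1,1,1,ω²,1,ω²), (ω,ω,1,1,1,ω²,1,ω²,1), (ω²,1,1,1,ω²,1,ω,ω,1), (ω²,1,1,ω²,1,ω,1,1,ω), (1,1,ω²,1,ω,1,1,ω²,ω), (1,ω²,1,ω,1,1,1,ω,ω²), (1,1,ω²,ω,1,ω²,ω,1,1), (1,ω²,1,1,ω,ω,ω²,1,1). -/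
import Mathlib


open Matrix Complex

noncomputable section

/-- ω = e^{2πi/3}, a primitive third root of unity. -/
def ω : ℂ := Complex.exp (2 * Real.pi * Complex.I / 3)

/-- The image of the braid generator σ₁ on V_G^{DDDD}. -/
def sig1 : Matrix (Fin 9) (Fin 9) ℂ :=
  diagonal ![ω ^ 2, 1, ω ^ 2, 1, 1, 1, ω, 1, ω]

/-- The image of the braid generator σ₃ on V_G^{DDDD}. -/
def sig3 : Matrix (Fin 9) (Fin 9) ℂ :=
  diagonal ![ω ^ 2, ω ^ 2, 1, 1, 1, ω, 1, ω, 1]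

/-- The image of the braid generator σ₂ on V_G^{DDDD}. -/
def sig2 : Matrix (Fin 9) (Fin 9) ℂ := (1 / 3 : ℂ) •
  !![1, ω, ω, ω ^ 2, ω ^ 2, 1, 1, 1, 1;
     ω, 1, ω, 1, 1, 1, ω ^ 2, 1, ω ^ 2;
     ω, ω, 1, 1, 1, ω ^ 2, 1, ω ^ 2, 1;
     ω ^ 2, 1, 1, 1, ω ^ 2, 1, ω, ω, 1;
     ω ^ 2, 1, 1, ω ^ 2, 1, ω, 1, 1, ω;
     1, 1, ω ^ 2, 1, ω, 1, 1, ω ^ 2, ω;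
     1, ω ^ 2, 1, ω, 1, 1, 1, ω, ω ^ 2;
     1, 1, ω ^ 2, ω, 1, ω ^ 2, ω, 1, 1;
     1, ω ^ 2, 1, 1, ω, ω, ω ^ 2, 1, 1]

/-- The standard basis vector e_i (1-indexed i corresponds to `e (i-1)`) of ℂ⁹. -/
def e (i : Fin 9) : Fin 9 → ℂ := Pi.single i 1

/-- The subspace W spanned by e₄ − e₅, e₈ − e₆, e₇ − e₉ (1-indexed). -/
def W : Submodule ℂ (Fin 9 → ℂ) :=
  Submodule.span ℂ {e 3 - e 4, e 7 - e 5, e 6 - e 8}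

-- evaluation lemmas for 9-vectors at numeral indices
section veval
variable {α : Type*} (a b c d f g h i j : α)
lemma cv0 : ![a,b,c,d,f,g,h,i,j] (0 : Fin 9) = a := rfl
lemma cv1 : ![a,b,c,d,f,g,h,i,j] (1 : Fin 9) = b := rfl
lemma cv2 : ![a,b,c,d,f,g,h,i,j] (2 : Fin 9) = c := rfl
lemma cv3 : ![a,b,c,d,f,g,h,i,j] (3 : Fin 9) = d := rfl
lemma cv4 : ![a,b,c,d,f,g,h,i,j] (4 : Fin 9) = f := rfl
lemma cv5 : ![a,b,c,d,f,g,h,i,j] (5 : Fin 9) = g := rfl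
lemma cv6 : ![a,b,c,d,f,g,h,i,j] (6 : Fin 9) = h := rfl
lemma cv7 : ![a,b,c,d,f,g,h,i,j] (7 : Fin 9) = i := rfl
lemma cv8 : ![a,b,c,d,f,g,h,i,j] (8 : Fin 9) = j := rfl
end veval

lemma sum9 (f : Fin 9 → ℂ) :
    ∑ k, f k = f 0 + f 1 + f 2 + f 3 + f 4 + f 5 + f 6 + f 7 + f 8 := by
  rw [Fin.sum_univ_castSucc, Fin.sum_univ_eight]
  rfl

lemma mulVec_entry (a : Matrix (Fin 9) (Fin 9) ℂ) (v : Fin 9 → ℂ) (i : Fin 9) :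
    a.mulVec v i = a i 0 * v 0 + a i 1 * v 1 + a i 2 * v 2 + a i 3 * v 3 + a i 4 * v 4
      + a i 5 * v 5 + a i 6 * v 6 + a i 7 * v 7 + a i 8 * v 8 := by
  show ∑ j, a i j * v j = _
  rw [sum9]

/-- A concrete description of W by linear equations. -/
def Wc : Submodule ℂ (Fin 9 → ℂ) where
  carrier := {v | v 0 = 0 ∧ v 1 = 0 ∧ v 2 = 0 ∧ v 4 = -v 3 ∧ v 5 = -v 7 ∧ v 8 = -v 6}
  zero_mem' := by simp
  add_mem' := by
    rintro a b ⟨h1, h2, h3, h4, h5, h6⟩ ⟨g1, g2, g3, g4, g5, g6⟩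
    refine ⟨?_, ?_, ?_, ?_, ?_, ?_⟩ <;>
      simp only [Pi.add_apply, h1, h2, h3, h4, h5, h6, g1, g2, g3, g4, g5, g6] <;> ring
  smul_mem' := by
    rintro c a ⟨h1, h2, h3, h4, h5, h6⟩
    refine ⟨?_, ?_, ?_, ?_, ?_, ?_⟩ <;>
      simp only [Pi.smul_apply, h1, h2, h3, h4, h5, h6, smul_eq_mul] <;> ring

lemma W_eq_Wc : W = Wc := by
  apply le_antisymm
  · rw [W, Submodule.span_le]
    rintro v (rfl | rfl | rfl) <;>
      refine ⟨?_, ?_, ?_, ?_, ?_, ?_⟩ <;>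
        simp [e, Pi.single_apply]
  · rintro v ⟨h1, h2, h3, h4, h5, h6⟩
    have hv : v = v 3 • (e 3 - e 4) + v 7 • (e 7 - e 5) + v 6 • (e 6 - e 8) := by
      funext i
      fin_cases i <;>
        simp [e, Pi.single_apply, h1, h2, h3, h4, h5, h6]
    rw [hv]
    refine Submodule.add_mem _ (Submodule.add_mem _ ?_ ?_) ?_ <;>
      exact Submodule.smul_mem _ _ (Submodule.subset_span (by simp))

/-- The 3-dimensional subspace W of ℂ⁹ is invariant under σ₁, σ₂ and σ₃. -/
theorem stmt1 :
    (∀ v ∈ W, sig1.mulVec v ∈ W) ∧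
    (∀ v ∈ W, sig2.mulVec v ∈ W) ∧
    (∀ v ∈ W, sig3.mulVec v ∈ W) := by
  rw [W_eq_Wc]
  refine ⟨?_, ?_, ?_⟩
  · rintro v ⟨h1, h2, h3, h4, h5, h6⟩
    refine ⟨?_, ?_, ?_, ?_, ?_, ?_⟩ <;>
      · simp only [sig1, Matrix.mulVec_diagonal,
          cv0, cv1, cv2, cv3, cv4, cv5, cv6, cv7, cv8, h1, h2, h3, h4, h5, h6]
        ring
  · rintro v ⟨h1, h2, h3, h4, h5, h6⟩
    refine ⟨?_, ?_, ?_, ?_, ?_, ?_⟩ <;>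
      · simp only [mulVec_entry, sig2, Matrix.smul_apply, Matrix.of_apply, smul_eq_mul,
          cv0, cv1, cv2, cv3, cv4, cv5, cv6, cv7, cv8, h1, h2, h3, h4, h5, h6]
        ring
  · rintro v ⟨h1, h2, h3, h4, h5, h6⟩
    refine ⟨?_, ?_, ?_, ?_, ?_, ?_⟩ <;>
      · simp only [sig3, Matrix.mulVec_diagonal,
          cv0, cv1, cv2, cv3, cv4, cv5, cv6, cv7, cv8, h1, h2, h3, h4, h5, h6]
        ring
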